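/- Let D be a connected simple digraph on {1,…,n} with n ≥ 2. The following are equivalent: (i) ℓ(D, α) = n − rk(α) for every α ∈ ⟨D⟩; (ii) every element of ⟨D⟩ is idempotent (⟨D⟩ is a band); (iii) either n = 2 and D is the complete digraph on two vertices, or there exists a partition of {1,…,n} into two sets V1 and V2 such that every edge (i1, i2) of D has i1 ∈ V1 and i2 ∈ V2. -/

import Mathlib

noncomputable section

variable {V : Type*}

/-- The arc `(a→b)`: the map sending `a` to `b` and fixing every other point. -/
def arcMap [DecidableEq V] (a b : V) : V → V := fun x => if x = a then b else x

/-- Evaluate a word of arcs, applying the arcs from left to right. -/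
def wordEval [DecidableEq V] (w : List (V × V)) : V → V :=
  fun x => w.foldl (fun y e => arcMap e.1 e.2 y) x

/-- `α ∈ ⟨D⟩`: `α` is a (nonempty) product of arcs of the digraph `D`. -/
def InGen [DecidableEq V] (D : V → V → Prop) (α : V → V) : Prop :=
  ∃ w : List (V × V), w ≠ [] ∧ (∀ e ∈ w, D e.1 e.2) ∧ wordEval w = α

/-- `ℓ(D, α)`: the minimal length of a word in the arcs of `D` expressing `α`. -/
def arcLen [DecidableEq V] (D : V → V → Prop) (α : V → V) : ℕ :=
  sInf {k | ∃ w : List (V × V), w.length = k ∧ (∀ e ∈ w, D e.1 e.2) ∧ wordEval w = α}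

/-- `fix(α)`: the number of fixed points of `α`. -/
def fixCnt (α : V → V) : ℕ := Set.ncard {x | α x = x}

/-- `rk(α)`: the rank of `α`, i.e. the cardinality of its image. -/
def rnk (α : V → V) : ℕ := Set.ncard (Set.range α)

/-- A set `C` is a cyclic orbit of `α` if it is a weakly connected component of the
functional digraph of `α` (edges `(x, α x)`) which is a directed cycle on at least two
vertices: equivalently, `C` is the forward orbit of a periodic point, has at least two
elements, and is closed under taking preimages. -/
def IsCyclicOrbit (α : V → V) (C : Set V) : Prop :=
  2 ≤ C.ncard ∧ (∃ x ∈ C, (∃ k, 0 < k ∧ α^[k] x = x) ∧ C = {y | ∃ k, α^[k] x = y}) ∧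
    ∀ y : V, α y ∈ C → y ∈ C

/-- `cycl(α)`: the number of cyclic orbits of `α`. -/
def cyclCnt (α : V → V) : ℕ := Set.ncard {C : Set V | IsCyclicOrbit α C}

/-- `D` is connected: any two vertices are joined by a directed path in some direction. -/
def ConnectedDigraph (D : V → V → Prop) : Prop :=
  ∀ u v : V, Relation.ReflTransGen D u v ∨ Relation.ReflTransGen D v u

/-- `D` is closed (equal to its closure): whenever `(b,a)` is an edge lying on a directed
cycle of `D` (i.e. there is a directed path from `a` back to `b`), `(a,b)` is also an edge. -/
def ClosedDigraph (D : V → V → Prop) : Prop :=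
  ∀ a b : V, D b a → Relation.ReflTransGen D a b → D a b

/-- Property (★): if `v0, v1, v2` is a directed path with `d_D(v0,v2) = 2`, then every
out-neighbour of `v1` and of `v2` lies in `{v0, v1, v2}`. -/
def StarCond (D : V → V → Prop) : Prop :=
  ∀ v0 v1 v2 : V, D v0 v1 → D v1 v2 → v0 ≠ v2 → ¬ D v0 v2 →
    ∀ u : V, (D v1 u ∨ D v2 u) → (u = v0 ∨ u = v1 ∨ u = v2)

/-- `C` is a strong component of `D`. -/
def IsSC (D : V → V → Prop) (C : Set V) : Prop :=
  ∃ v : V, C = {u | Relation.ReflTransGen D u v ∧ Relation.ReflTransGen D v u}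

/-- `C1` connects to `C2`: some edge goes from `C1` to `C2`. -/
def ConnectsTo (D : V → V → Prop) (C1 C2 : Set V) : Prop :=
  ∃ v1 ∈ C1, ∃ v2 ∈ C2, D v1 v2

/-- `C1` fully connects to `C2`: all pairs are edges. -/
def FullyConnects (D : V → V → Prop) (C1 C2 : Set V) : Prop :=
  ∀ v1 ∈ C1, ∀ v2 ∈ C2, D v1 v2

/-- A terminal strong component: it connects to no other strong component. -/
def IsTerminalSC (D : V → V → Prop) (C : Set V) : Prop :=
  IsSC D C ∧ ∀ C' : Set V, IsSC D C' → C' ≠ C → ¬ ConnectsTo D C C'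

/-- Property (★★): nonterminal strong components have at most 2 vertices and terminal
strong components have at most 3 vertices. -/
def StarStarCond (D : V → V → Prop) : Prop :=
  ∀ C : Set V, IsSC D C →
    (IsTerminalSC D C → C.ncard ≤ 3) ∧ (¬ IsTerminalSC D C → C.ncard ≤ 2)

/-- The induced subdigraph on `C` is an undirected path `a - b - c` on three vertices. -/
def IsP3 (D : V → V → Prop) (C : Set V) : Prop :=
  ∃ a b c : V, a ≠ b ∧ b ≠ c ∧ a ≠ c ∧ C = {a, b, c} ∧
    ∀ u ∈ C, ∀ w ∈ C,
      (D u w ↔ (u = a ∧ w = b) ∨ (u = b ∧ w = a) ∨ (u = b ∧ w = c) ∨ (u = c ∧ w = b))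

/-- `D` has a subdigraph isomorphic to `H`: an injection mapping edges of `H` to edges of `D`. -/
def HasSubdigraph (D : V → V → Prop) {m : ℕ} (H : Fin m → Fin m → Prop) : Prop :=
  ∃ f : Fin m → V, Function.Injective f ∧ ∀ i j : Fin m, H i j → D (f i) (f j)

/-- `Θ_k`: the directed cycle on `k` vertices. -/
def Theta (k : ℕ) : Fin k → Fin k → Prop := fun i j => (j : ℕ) = ((i : ℕ) + 1) % k

/-- `Γ1` (vertices relabelled from `{1,…,5}` to `{0,…,4}`). -/
def Gamma1 : Fin 5 → Fin 5 → Prop := fun i j =>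
  ((i : ℕ), (j : ℕ)) ∈ [(0,3),(3,0),(1,3),(3,1),(2,3),(3,2),(3,4)]

/-- `Γ2` (vertices relabelled from `{1,…,5}` to `{0,…,4}`). -/
def Gamma2 : Fin 5 → Fin 5 → Prop := fun i j =>
  ((i : ℕ), (j : ℕ)) ∈ [(0,2),(2,0),(1,2),(2,1),(2,3),(3,2),(3,4)]

/-- `Γ3` (vertices relabelled from `{1,…,4}` to `{0,…,3}`). -/
def Gamma3 : Fin 4 → Fin 4 → Prop := fun i j =>
  ((i : ℕ), (j : ℕ)) ∈ [(0,1),(1,2),(2,0),(2,3)]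

/-- `Γ4` (vertices relabelled from `{1,…,5}` to `{0,…,4}`). -/
def Gamma4 : Fin 5 → Fin 5 → Prop := fun i j =>
  ((i : ℕ), (j : ℕ)) ∈ [(0,1),(1,2),(2,3),(3,0),(3,4)]

/-- No subdigraph isomorphic to `Γ1`, `Γ2`, `Γ3`, `Γ4` or `Θ_k` for `k ≥ 5`. -/
def ForbiddenFree (D : V → V → Prop) : Prop :=
  ¬ HasSubdigraph D Gamma1 ∧ ¬ HasSubdigraph D Gamma2 ∧ ¬ HasSubdigraph D Gamma3 ∧
    ¬ HasSubdigraph D Gamma4 ∧ ∀ k : ℕ, 5 ≤ k → ¬ HasSubdigraph D (Theta k)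

/-- `D` is acyclic: it has no directed cycle. -/
def AcyclicRel (D : V → V → Prop) : Prop := ∀ v : V, ¬ Relation.TransGen D v v

/-- `ψ_A(u,w)`: the maximal number of edges of a directed path from `u` to `w` in `A`
(in particular `ψ_A(u,u) = 0`). -/
def psiLongest (A : V → V → Prop) (u w : V) : ℕ :=
  sSup {l | ∃ p : List V, p.Chain' A ∧ p.Nodup ∧
    p.head? = some u ∧ p.getLast? = some w ∧ p.length = l + 1}

/-- `d_D(u,w)`: the minimal number of edges of a directed path from `u` to `w` in `D`. -/
def ddist (D : V → V → Prop) (u w : V) : ℕ :=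
  sInf {l | ∃ p : List V, p.Chain' D ∧ p.head? = some u ∧ p.getLast? = some w ∧
    p.length = l + 1}

/-- A tournament: no loops, and exactly one of `(u,v)`, `(v,u)` is an edge for `u ≠ v`. -/
def IsTournament (D : V → V → Prop) : Prop :=
  (∀ v : V, ¬ D v v) ∧ ∀ u v : V, u ≠ v → (D u v ∨ D v u) ∧ ¬ (D u v ∧ D v u)

/-- A strong (strongly connected) digraph. -/
def IsStrongDigraph (D : V → V → Prop) : Prop :=
  ∀ u v : V, Relation.ReflTransGen D u v

namespace Stmt11Aux

variable {n : ℕ}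

lemma arcMap_self {W : Type*} [DecidableEq W] (a b : W) : arcMap a b a = b := by
  simp [arcMap]

lemma arcMap_ne {W : Type*} [DecidableEq W] (a b x : W) (h : x ≠ a) : arcMap a b x = x := by
  simp [arcMap, h]

lemma wordEval_nil {W : Type*} [DecidableEq W] : wordEval ([] : List (W × W)) = id := rfl

lemma wordEval_cons {W : Type*} [DecidableEq W] (e : W × W) (w : List (W × W)) (x : W) :
    wordEval (e :: w) x = wordEval w (arcMap e.1 e.2 x) := rfl

lemma wordEval_append {W : Type*} [DecidableEq W] (w1 w2 : List (W × W)) (x : W) :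
    wordEval (w1 ++ w2) x = wordEval w2 (wordEval w1 x) := by
  simp [wordEval, List.foldl_append]

lemma wordEval_singleton {W : Type*} [DecidableEq W] (e : W × W) (x : W) :
    wordEval [e] x = arcMap e.1 e.2 x := rfl

lemma rnk_id : rnk (id : Fin n → Fin n) = n := by
  simp [rnk, Set.range_id, Set.ncard_univ]

lemma ncard_compl (s : Set (Fin n)) : sᶜ.ncard = n - s.ncard := by
  have h := Set.ncard_add_ncard_compl s
  simp only [Nat.card_eq_fintype_card, Fintype.card_fin] at h
  omega

lemma ncard_le (s : Set (Fin n)) : s.ncard ≤ n := by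
  have h := Set.ncard_add_ncard_compl s
  simp only [Nat.card_eq_fintype_card, Fintype.card_fin] at h
  omega

lemma rnk_le_succ (a b : Fin n) (f : Fin n → Fin n) :
    rnk f ≤ rnk (fun x => arcMap a b (f x)) + 1 := by
  have h1 : Set.range f ⊆ (Set.range fun x => arcMap a b (f x)) ∪ {a} := by
    rintro y ⟨x, rfl⟩
    by_cases h : f x = a
    · right; simp [h]
    · left; exact ⟨x, arcMap_ne a b _ h⟩
  calc rnk f ≤ ((Set.range fun x => arcMap a b (f x)) ∪ {a}).ncard :=
        Set.ncard_le_ncard h1 (Set.toFinite _)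
    _ ≤ (Set.range fun x => arcMap a b (f x)).ncard + ({a} : Set (Fin n)).ncard :=
        Set.ncard_union_le _ _
    _ = rnk (fun x => arcMap a b (f x)) + 1 := by rw [Set.ncard_singleton]; rfl

lemma n_le_len_add_rnk (w : List (Fin n × Fin n)) :
    n ≤ w.length + rnk (wordEval w) := by
  induction w using List.reverseRecOn with
  | nil => simp [wordEval_nil, rnk_id]
  | append_singleton w e ih =>
      have h := rnk_le_succ e.1 e.2 (wordEval w)
      have heq : (fun x => arcMap e.1 e.2 (wordEval w x)) = wordEval (w ++ [e]) := by
        funext x; rw [wordEval_append]; rfl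
      rw [heq] at h
      simp only [List.length_append, List.length_singleton]
      omega

lemma arcLen_lower (D : Fin n → Fin n → Prop) (α : Fin n → Fin n) (hα : InGen D α) :
    n ≤ arcLen D α + rnk α := by
  obtain ⟨w, -, hw, hev⟩ := hα
  have hne : {k | ∃ w : List (Fin n × Fin n), w.length = k ∧ (∀ e ∈ w, D e.1 e.2) ∧
      wordEval w = α}.Nonempty := ⟨w.length, w, rfl, hw, hev⟩
  obtain ⟨w', hlen, -, hev'⟩ := Nat.sInf_mem hne
  have := n_le_len_add_rnk w'
  rw [hlen, hev'] at this
  exact this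

end Stmt11Aux
namespace Stmt11Aux

lemma beta_eval (a b c : Fin n) (hab : a ≠ b) (hca : c ≠ a) :
    wordEval [(b,c),(a,b)] = fun x => if x = a then b else if x = b then c else x := by
  funext x
  show arcMap a b (arcMap b c x) = _
  by_cases hxa : x = a
  · rw [arcMap_ne b c x (by rw [hxa]; exact hab), hxa, arcMap_self, if_pos rfl]
  · by_cases hxb : x = b
    · rw [hxb, arcMap_self, arcMap_ne a b c hca, if_neg (by rw [← hxb]; exact hxa),
        if_pos rfl]
    · rw [arcMap_ne b c x hxb, arcMap_ne a b x hxa, if_neg hxa, if_neg hxb]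

lemma beta_edges (D : Fin n → Fin n → Prop) (a b c : Fin n) (hab : D a b) (hbc : D b c) :
    ∀ e ∈ [(b,c),(a,b)], D e.1 e.2 := by
  intro e he
  simp only [List.mem_cons, List.not_mem_nil, or_false] at he
  rcases he with h | h <;> rw [h]
  · exact hbc
  · exact hab

lemma beta_ingen (D : Fin n → Fin n → Prop) (a b c : Fin n) (hab : D a b) (hbc : D b c) :
    InGen D (wordEval [(b,c),(a,b)]) :=
  ⟨[(b,c),(a,b)], by simp, beta_edges D a b c hab hbc, rfl⟩

lemma key_of_band (D : Fin n → Fin n → Prop) (hloop : ∀ v, ¬ D v v)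
    (hband : ∀ α : Fin n → Fin n, InGen D α → α ∘ α = α) :
    ∀ a b c : Fin n, D a b → D b c → c = a := by
  intro a b c hab hbc
  by_contra hca
  have hab' : a ≠ b := fun h => hloop a (h ▸ hab)
  have hbc' : b ≠ c := fun h => hloop b (h ▸ hbc)
  have hβ := beta_eval a b c hab' hca
  have hga : wordEval [(b,c),(a,b)] a = b := by rw [hβ]; simp
  have hgb : wordEval [(b,c),(a,b)] b = c := by
    rw [hβ]; simp [hab'.symm]
  have hidem := hband _ (beta_ingen D a b c hab hbc)
  have h1 : wordEval [(b,c),(a,b)] (wordEval [(b,c),(a,b)] a)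
      = wordEval [(b,c),(a,b)] a := congrFun hidem a
  rw [hga, hgb] at h1
  exact hbc' h1.symm

lemma key_of_i (hn : 2 ≤ n) (D : Fin n → Fin n → Prop) (hloop : ∀ v, ¬ D v v)
    (hi : ∀ α : Fin n → Fin n, InGen D α → arcLen D α = n - rnk α) :
    ∀ a b c : Fin n, D a b → D b c → c = a := by
  intro a b c hab hbc
  by_contra hca
  have hab' : a ≠ b := fun h => hloop a (h ▸ hab)
  have hbc' : b ≠ c := fun h => hloop b (h ▸ hbc)
  have hβ := beta_eval a b c hab' hca
  have hga : wordEval [(b,c),(a,b)] a = b := by rw [hβ]; simp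
  have hgb : wordEval [(b,c),(a,b)] b = c := by
    rw [hβ]; simp [hab'.symm]
  have hgen := beta_ingen D a b c hab hbc
  have hrange : Set.range (wordEval [(b,c),(a,b)]) = {a}ᶜ := by
    ext y
    simp only [Set.mem_range, Set.mem_compl_iff, Set.mem_singleton_iff]
    constructor
    · rintro ⟨x, rfl⟩
      rw [hβ]
      by_cases hxa : x = a
      · simp only [if_pos hxa]; exact hab'.symm
      · by_cases hxb : x = b
        · simp only [if_neg hxa, if_pos hxb]; exact hca
        · simp only [if_neg hxa, if_neg hxb]; exact hxa
    · intro hy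
      by_cases hyb : y = b
      · exact ⟨a, by rw [hga, hyb]⟩
      · exact ⟨y, by rw [hβ]; simp only [if_neg hy, if_neg hyb]⟩
  have hrnk : rnk (wordEval [(b,c),(a,b)]) = n - 1 := by
    rw [rnk, hrange, ncard_compl, Set.ncard_singleton]
  have hlen := hi _ hgen
  rw [hrnk] at hlen
  have hlen1 : arcLen D (wordEval [(b,c),(a,b)]) = 1 := by omega
  have hne : {k | ∃ w : List (Fin n × Fin n), w.length = k ∧ (∀ e ∈ w, D e.1 e.2) ∧
      wordEval w = wordEval [(b,c),(a,b)]}.Nonempty :=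
    ⟨2, [(b,c),(a,b)], rfl, beta_edges D a b c hab hbc, rfl⟩
  obtain ⟨w, hwlen, -, hwev⟩ := Nat.sInf_mem hne
  rw [show sInf {k | ∃ w : List (Fin n × Fin n), w.length = k ∧ (∀ e ∈ w, D e.1 e.2) ∧
      wordEval w = wordEval [(b,c),(a,b)]} = arcLen D (wordEval [(b,c),(a,b)]) from rfl,
    hlen1] at hwlen
  obtain ⟨e, rfl⟩ := List.length_eq_one_iff.mp hwlen
  have ha' : arcMap e.1 e.2 a = b := by rw [← wordEval_singleton, hwev, hga]
  have hb' : arcMap e.1 e.2 b = c := by rw [← wordEval_singleton, hwev, hgb]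
  have hae : a = e.1 := by
    by_contra h; rw [arcMap_ne _ _ _ h] at ha'; exact hab' ha'
  have hbe : b = e.1 := by
    by_contra h; rw [arcMap_ne _ _ _ h] at hb'; exact hbc' hb'
  exact hab' (hae.trans hbe.symm)

end Stmt11Aux
namespace Stmt11Aux

lemma structure_of_key (hn : 2 ≤ n) (D : Fin n → Fin n → Prop) (hloop : ∀ v, ¬ D v v)
    (hconn : ConnectedDigraph D) (K : ∀ a b c : Fin n, D a b → D b c → c = a) :
    (n = 2 ∧ ∀ a b : Fin n, a ≠ b → D a b) ∨
      ∃ V1 V2 : Set (Fin n), V1 ∪ V2 = Set.univ ∧ Disjoint V1 V2 ∧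
        ∀ a b : Fin n, D a b → a ∈ V1 ∧ b ∈ V2 := by
  by_cases h2 : ∃ a b : Fin n, D a b ∧ D b a
  · left
    obtain ⟨a, b, hab, hba⟩ := h2
    have hne : a ≠ b := fun h => hloop a (h ▸ hab)
    have fwd : ∀ x y : Fin n, D x y → (x = a ∨ x = b) → (y = a ∨ y = b) := by
      rintro x y hxy (rfl | rfl)
      · right; exact K b x y hba hxy
      · left; exact K a x y hab hxy
    have bwd : ∀ x y : Fin n, D x y → (y = a ∨ y = b) → (x = a ∨ x = b) := by
      rintro x y hxy (rfl | rfl)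
      · right; exact (K x y b hxy hab).symm
      · left; exact (K x y a hxy hba).symm
    have hS : ∀ v : Fin n, v = a ∨ v = b := by
      intro v
      rcases hconn v a with h | h
      · refine Relation.ReflTransGen.head_induction_on h (Or.inl rfl) ?_
        intro x c hxc _ hc
        exact bwd x c hxc hc
      · induction h with
        | refl => exact Or.inl rfl
        | tail _ hcy ih => exact fwd _ _ hcy ih
    have hcard : n = 2 := by
      have hsub : (Finset.univ : Finset (Fin n)) ⊆ {a, b} := by
        intro v _
        rcases hS v with rfl | rfl <;> simp
      have h1 : (Finset.univ : Finset (Fin n)).card ≤ ({a, b} : Finset (Fin n)).card :=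
        Finset.card_le_card hsub
      rw [Finset.card_univ, Fintype.card_fin, Finset.card_pair hne] at h1
      omega
    refine ⟨hcard, ?_⟩
    intro x y hxy
    rcases hS x with rfl | rfl <;> rcases hS y with rfl | rfl
    · exact absurd rfl hxy
    · exact hab
    · exact hba
    · exact absurd rfl hxy
  · right
    refine ⟨{v | ∃ u, D v u}, {v | ∃ u, D v u}ᶜ, Set.union_compl_self _,
      disjoint_compl_right, ?_⟩
    intro a b hab
    refine ⟨⟨b, hab⟩, ?_⟩
    rintro ⟨c, hbc⟩
    exact h2 ⟨a, b, hab, (K a b c hab hbc) ▸ hbc⟩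

lemma fin2cases (h2 : n = 2) (x y z : Fin n) (hxy : x ≠ y) : z = x ∨ z = y := by
  subst h2
  have hx := x.isLt
  have hy := y.isLt
  have hz := z.isLt
  have hxy' : x.val ≠ y.val := fun h => hxy (Fin.ext h)
  have : z.val = x.val ∨ z.val = y.val := by omega
  rcases this with h | h
  · exact Or.inl (Fin.ext h)
  · exact Or.inr (Fin.ext h)

-- case A : n = 2 and complete
lemma constA (h2 : n = 2) (D : Fin n → Fin n → Prop) (hloop : ∀ v, ¬ D v v) :
    ∀ w : List (Fin n × Fin n), w ≠ [] → (∀ e ∈ w, D e.1 e.2) →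
      ∃ b, wordEval w = fun _ => b := by
  intro w
  induction w with
  | nil => intro h; exact absurd rfl h
  | cons e w ih =>
    intro _ he
    have hew := he e (List.mem_cons_self)
    have hne : e.1 ≠ e.2 := fun h => hloop e.1 (by rw [h] at hew ⊢; exact hew)
    by_cases hw : w = []
    · subst hw
      refine ⟨e.2, ?_⟩
      funext x
      rw [show wordEval [e] x = arcMap e.1 e.2 x from rfl]
      rcases fin2cases h2 e.1 e.2 x hne with rfl | rfl
      · exact arcMap_self _ _
      · exact arcMap_ne _ _ _ (Ne.symm hne)
    · obtain ⟨b, hb⟩ := ih hw (fun e' he' => he e' (List.mem_cons_of_mem _ he'))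
      refine ⟨b, ?_⟩
      funext x
      rw [wordEval_cons, hb]

lemma bandA (h2 : n = 2) (D : Fin n → Fin n → Prop) (hloop : ∀ v, ¬ D v v) :
    ∀ α : Fin n → Fin n, InGen D α → α ∘ α = α := by
  rintro α ⟨w, hwne, he, rfl⟩
  obtain ⟨b, hb⟩ := constA h2 D hloop w hwne he
  rw [hb]
  rfl

lemma iA (h2 : n = 2) (D : Fin n → Fin n → Prop) (hloop : ∀ v, ¬ D v v)
    (hcomp : ∀ a b : Fin n, a ≠ b → D a b) :
    ∀ α : Fin n → Fin n, InGen D α → arcLen D α = n - rnk α := by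
  subst h2
  intro α hα
  have hlow := arcLen_lower D α hα
  obtain ⟨w, hwne, he, hev⟩ := hα
  obtain ⟨b, hb⟩ := constA rfl D hloop w hwne he
  rw [hev] at hb
  have hrnk : rnk α = 1 := by
    rw [rnk, hb, Set.range_const, Set.ncard_singleton]
  have hb' : ∃ b' : Fin 2, b' ≠ b := exists_ne b
  obtain ⟨b', hb'⟩ := hb'
  have hup : arcLen D α ≤ 1 := by
    apply Nat.sInf_le
    refine ⟨[(b', b)], rfl, ?_, ?_⟩
    · intro e he'
      simp only [List.mem_singleton] at he'
      rw [he']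
      exact hcomp b' b hb'
    · funext x
      rw [show wordEval [(b',b)] x = arcMap b' b x from rfl, hb]
      rcases fin2cases rfl b' b x hb' with rfl | rfl
      · exact arcMap_self _ _
      · exact arcMap_ne _ _ _ (Ne.symm hb')
  rw [hrnk] at hlow ⊢
  omega

end Stmt11Aux
namespace Stmt11Aux

lemma B1 {D : Fin n → Fin n → Prop} {V1 V2 : Set (Fin n)}
    (hd : Disjoint V1 V2) (hD : ∀ a b : Fin n, D a b → a ∈ V1 ∧ b ∈ V2)
    (w : List (Fin n × Fin n)) (he : ∀ e ∈ w, D e.1 e.2) :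
    (∀ y ∈ V2, wordEval w y = y) ∧ (∀ x, wordEval w x = x ∨ wordEval w x ∈ V2) := by
  induction w with
  | nil => exact ⟨fun y _ => rfl, fun x => Or.inl rfl⟩
  | cons e w ih =>
    have hew := he e (List.mem_cons_self)
    obtain ⟨h1, h2⟩ := hD _ _ hew
    have ih' := ih (fun e' he' => he e' (List.mem_cons_of_mem _ he'))
    constructor
    · intro y hy
      rw [wordEval_cons, arcMap_ne]
      · exact ih'.1 y hy
      · rintro rfl
        exact Set.disjoint_left.mp hd h1 hy
    · intro x
      rw [wordEval_cons]
      by_cases hx : x = e.1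
      · subst hx
        rw [arcMap_self]
        right
        rw [ih'.1 e.2 h2]
        exact h2
      · rw [arcMap_ne _ _ _ hx]
        exact ih'.2 x

lemma B2 {D : Fin n → Fin n → Prop} {V1 V2 : Set (Fin n)}
    (hd : Disjoint V1 V2) (hD : ∀ a b : Fin n, D a b → a ∈ V1 ∧ b ∈ V2)
    (w : List (Fin n × Fin n)) (he : ∀ e ∈ w, D e.1 e.2) :
    ∀ x, wordEval w x ≠ x → D x (wordEval w x) := by
  induction w with
  | nil => intro x h; exact absurd rfl h
  | cons e w ih =>
    intro x h
    have hew := he e (List.mem_cons_self)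
    have he' : ∀ e' ∈ w, D e'.1 e'.2 := fun e' he'' => he e' (List.mem_cons_of_mem _ he'')
    rw [wordEval_cons] at h ⊢
    by_cases hx : x = e.1
    · subst hx
      rw [arcMap_self] at h ⊢
      rw [(B1 hd hD w he').1 e.2 (hD _ _ hew).2]
      exact hew
    · rw [arcMap_ne _ _ _ hx] at h ⊢
      exact ih he' x h

lemma B3 (α : Fin n → Fin n) (hfix : ∀ x, α (α x) = α x) :
    ∀ l : List (Fin n), (∀ x ∈ l, α x ≠ x) → ∀ z : Fin n,
      wordEval (l.map fun x => (x, α x)) z = if z ∈ l then α z else z := by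
  intro l
  induction l with
  | nil => intro _ z; simp [wordEval_nil]
  | cons x l ih =>
    intro hl z
    have hl' : ∀ y ∈ l, α y ≠ y := fun y hy => hl y (List.mem_cons_of_mem _ hy)
    rw [List.map_cons, wordEval_cons]
    by_cases hz : z = x
    · subst hz
      rw [show arcMap (z, α z).1 (z, α z).2 z = α z from arcMap_self _ _, ih hl' (α z)]
      have hnm : α z ∉ l := fun h => hl' _ h (hfix z)
      rw [if_neg hnm, if_pos (List.mem_cons_self)]
    · rw [show arcMap (x, α x).1 (x, α x).2 z = z from arcMap_ne _ _ _ hz, ih hl' z]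
      by_cases hzl : z ∈ l
      · rw [if_pos hzl, if_pos (List.mem_cons_of_mem _ hzl)]
      · rw [if_neg hzl, if_neg (by simp [hz, hzl])]

lemma bandB {D : Fin n → Fin n → Prop} {V1 V2 : Set (Fin n)}
    (hu : V1 ∪ V2 = Set.univ) (hd : Disjoint V1 V2)
    (hD : ∀ a b : Fin n, D a b → a ∈ V1 ∧ b ∈ V2) :
    ∀ α : Fin n → Fin n, InGen D α → α ∘ α = α := by
  rintro α ⟨w, -, he, rfl⟩
  obtain ⟨hfixV2, hmove⟩ := B1 hd hD w he
  funext x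
  rcases hmove x with h | h
  · show wordEval w (wordEval w x) = wordEval w x
    rw [h, h]
  · exact hfixV2 _ h

lemma iB (hn : 2 ≤ n) {D : Fin n → Fin n → Prop} {V1 V2 : Set (Fin n)}
    (hu : V1 ∪ V2 = Set.univ) (hd : Disjoint V1 V2)
    (hD : ∀ a b : Fin n, D a b → a ∈ V1 ∧ b ∈ V2) :
    ∀ α : Fin n → Fin n, InGen D α → arcLen D α = n - rnk α := by
  intro α hα
  have hlow := arcLen_lower D α hα
  obtain ⟨w, -, he, hev⟩ := hα
  obtain ⟨hfixV2, hmove⟩ := B1 hd hD w he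
  rw [hev] at hfixV2 hmove
  have hfix : ∀ x, α (α x) = α x := by
    intro x
    rcases hmove x with h | h
    · rw [h, h]
    · exact hfixV2 _ h
  have hedge : ∀ x, α x ≠ x → D x (α x) := by
    intro x h
    have := B2 hd hD w he x (by rw [hev]; exact h)
    rwa [hev] at this
  set M : Set (Fin n) := {x | α x ≠ x} with hM
  have hfin : M.Finite := Set.toFinite _
  have hrange : Set.range α = Mᶜ := by
    ext y
    constructor
    · rintro ⟨x, rfl⟩
      simp only [Set.mem_compl_iff, hM, Set.mem_setOf_eq, not_not]
      exact hfix x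
    · intro hy
      exact ⟨y, not_not.mp hy⟩
  have hrnk : rnk α = n - M.ncard := by
    rw [rnk, hrange, ncard_compl]
  have hmle : M.ncard ≤ n := ncard_le M
  -- construct the word
  have hlist : ∀ x ∈ hfin.toFinset.toList, α x ≠ x := by
    intro x hx
    rw [Finset.mem_toList, Set.Finite.mem_toFinset] at hx
    exact hx
  have hup : arcLen D α ≤ M.ncard := by
    apply Nat.sInf_le
    refine ⟨hfin.toFinset.toList.map fun x => (x, α x), ?_, ?_, ?_⟩
    · rw [List.length_map, Finset.length_toList, Set.ncard_eq_toFinset_card _ hfin]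
    · intro e hee
      simp only [List.mem_map] at hee
      obtain ⟨x, hx, rfl⟩ := hee
      exact hedge x (hlist x hx)
    · funext z
      rw [B3 α hfix _ hlist z]
      by_cases hz : z ∈ M
      · rw [if_pos (by rw [Finset.mem_toList, Set.Finite.mem_toFinset]; exact hz)]
      · rw [if_neg (by rw [Finset.mem_toList, Set.Finite.mem_toFinset]; exact hz),
          not_not.mp hz]
  rw [hrnk] at hlow ⊢
  omega

end Stmt11Aux

open Stmt11Aux

/-- for a connected simple digraph `D` on `{1,…,n}`, `n ≥ 2`, the following
are equivalent: (i) `ℓ(D, α) = n − rk(α)` for all `α ∈ ⟨D⟩`; (ii) `⟨D⟩` is a band;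
(iii) `n = 2` and `D = K_2`, or the edges of `D` go from a set `V1` to its complement `V2`. -/
theorem stmt11 (n : ℕ) (hn : 2 ≤ n) (D : Fin n → Fin n → Prop) (hloop : ∀ v, ¬ D v v)
    (hconn : ConnectedDigraph D) :
    ((∀ α : Fin n → Fin n, InGen D α → arcLen D α = n - rnk α) ↔
      (∀ α : Fin n → Fin n, InGen D α → α ∘ α = α)) ∧
    ((∀ α : Fin n → Fin n, InGen D α → α ∘ α = α) ↔
      ((n = 2 ∧ ∀ a b : Fin n, a ≠ b → D a b) ∨
        ∃ V1 V2 : Set (Fin n), V1 ∪ V2 = Set.univ ∧ Disjoint V1 V2 ∧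
          ∀ a b : Fin n, D a b → a ∈ V1 ∧ b ∈ V2)) := by
  have band_of_struct :
      ((n = 2 ∧ ∀ a b : Fin n, a ≠ b → D a b) ∨
        ∃ V1 V2 : Set (Fin n), V1 ∪ V2 = Set.univ ∧ Disjoint V1 V2 ∧
          ∀ a b : Fin n, D a b → a ∈ V1 ∧ b ∈ V2) →
      ∀ α : Fin n → Fin n, InGen D α → α ∘ α = α := by
    rintro (⟨h2, -⟩ | ⟨V1, V2, hu, hd, hD⟩)
    · exact bandA h2 D hloop
    · exact bandB hu hd hD
  have i_of_struct :
      ((n = 2 ∧ ∀ a b : Fin n, a ≠ b → D a b) ∨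
        ∃ V1 V2 : Set (Fin n), V1 ∪ V2 = Set.univ ∧ Disjoint V1 V2 ∧
          ∀ a b : Fin n, D a b → a ∈ V1 ∧ b ∈ V2) →
      ∀ α : Fin n → Fin n, InGen D α → arcLen D α = n - rnk α := by
    rintro (⟨h2, hcomp⟩ | ⟨V1, V2, hu, hd, hD⟩)
    · exact iA h2 D hloop hcomp
    · exact iB hn hu hd hD
  constructor
  · constructor
    · intro hi
      exact band_of_struct
        (structure_of_key hn D hloop hconn (key_of_i hn D hloop hi))
    · intro hband
      exact i_of_struct
        (structure_of_key hn D hloop hconn (key_of_band D hloop hband))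
  · constructor
    · intro hband
      exact structure_of_key hn D hloop hconn (key_of_band D hloop hband)
    · exact band_of_struct
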